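/- For reals δ ≥ 3/2 and α > 0, one has ψ((α+δ+1)/2) - ψ((α+δ)/2 + 1) + 1/(α+δ²) < 0, where ψ is the digamma function. -/

import Mathlib

open Real Set Filter

/-- The digamma function `ψ = (log ∘ Γ)'`. -/
noncomputable def digamma (t : ℝ) : ℝ := deriv (fun s => Real.log (Real.Gamma s)) t

private lemma logGamma_diff {x : ℝ} (hx : 0 < x) :
    DifferentiableAt ℝ (fun s => Real.log (Real.Gamma s)) x := by
  refine (Real.differentiableAt_Gamma ?_).log (Real.Gamma_ne_zero ?_) <;>
    exact fun m => ne_of_gt (by have := Nat.cast_nonneg (α := ℝ) m; linarith)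

private lemma digamma_rec {x : ℝ} (hx : 0 < x) : digamma (x + 1) = digamma x + 1 / x := by
  unfold digamma
  rw [← deriv_comp_add_const, one_div, ← Real.deriv_log,
    ← deriv_fun_add (logGamma_diff hx) (Real.differentiableAt_log hx.ne')]
  apply Filter.EventuallyEq.deriv_eq
  filter_upwards [eventually_gt_nhds hx] with y hy
  simp only [Real.Gamma_add_one hy.ne',
    Real.log_mul hy.ne' (Real.Gamma_pos_of_pos hy).ne', add_comm]

private lemma digamma_mono {a b : ℝ} (ha : 0 < a) (hab : a ≤ b) :
    digamma a ≤ digamma b := by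
  have := Real.convexOn_log_Gamma.monotoneOn_deriv
    (fun x hx => by
      have : (0:ℝ) < x := hx
      simpa [Function.comp_def] using logGamma_diff this)
    (mem_Ioi.mpr ha) (mem_Ioi.mpr (ha.trans_le hab)) hab
  simpa [digamma, Function.comp_def] using this

private lemma key_step (x : ℝ) (hx : 5 / 4 ≤ x) (N : ℕ) :
    1 / (2 * x - 3 / 8) - 1 / (2 * x + 2 * N - 3 / 8)
      ≤ digamma (x + 1 / 2) - digamma x := by
  induction N generalizing x with
  | zero =>
      simp only [Nat.cast_zero, mul_zero, add_zero, sub_self]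
      have h0 : (0:ℝ) < x := by linarith
      linarith [digamma_mono h0 (by linarith : x ≤ x + 1/2)]
  | succ n ih =>
      have hx0 : (0:ℝ) < x := by linarith
      have hx2 : (0:ℝ) < x + 1/2 := by linarith
      have h1 : digamma (x + 1) = digamma x + 1 / x := digamma_rec hx0
      have h2 : digamma (x + 1 + 1/2) = digamma (x + 1/2) + 1 / (x + 1/2) := by
        have := digamma_rec hx2
        rw [show x + 1/2 + 1 = x + 1 + 1/2 by ring] at this
        exact this
      have ih' := ih (x + 1) (by linarith)
      have e1 : (0:ℝ) < 2 * x - 3/8 := by linarith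
      have e2 : (0:ℝ) < 2 * x + 13/8 := by linarith
      have e3 : (0:ℝ) < 2 * (x+1) + 2 * n - 3/8 := by have := Nat.cast_nonneg (α := ℝ) n; linarith
      -- arithmetic: 1/(2x-3/8) - 1/(2x+13/8) ≤ 1/x - 1/(x+1/2)
      have harith : 1 / (2 * x - 3/8) - 1 / (2 * (x+1) - 3/8) ≤ 1 / x - 1 / (x + 1/2) := by
        rw [div_sub_div _ _ (ne_of_gt e1) (by linarith : (2*(x+1)-3/8) ≠ 0),
          div_sub_div _ _ (ne_of_gt hx0) (ne_of_gt hx2)]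
        rw [div_le_div_iff₀ (by nlinarith) (by nlinarith)]
        nlinarith
      have hcast : ((n:ℝ) + 1) = ((n+1 : ℕ) : ℝ) := by push_cast; ring
      have heq : 2 * (x+1) + 2 * n - 3/8 = 2 * x + 2 * ((n:ℝ)+1) - 3/8 := by ring
      rw [heq] at ih'
      push_cast
      linarith

private lemma key_bound (x : ℝ) (hx : 5 / 4 ≤ x) :
    1 / (2 * x - 3 / 8) ≤ digamma (x + 1 / 2) - digamma x := by
  have htop : Tendsto (fun N : ℕ => 2 * x + 2 * (N:ℝ) - 3/8) atTop atTop := by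
    apply tendsto_atTop_add_const_right
    exact tendsto_atTop_add_const_left _ _
      ((tendsto_natCast_atTop_atTop).const_mul_atTop two_pos)
  have h0 : Tendsto (fun N : ℕ => 1 / (2 * x + 2 * (N:ℝ) - 3/8)) atTop (nhds 0) := by
    simpa [one_div, Function.comp_def] using tendsto_inv_atTop_zero.comp htop
  have hlim : Tendsto (fun N : ℕ => 1 / (2 * x - 3/8) - 1 / (2 * x + 2 * (N:ℝ) - 3/8))
      atTop (nhds (1 / (2 * x - 3/8))) := by
    simpa using (tendsto_const_nhds (x := 1 / (2 * x - 3/8)) (f := atTop)).sub h0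
  exact le_of_tendsto hlim (Filter.Eventually.of_forall fun N => key_step x hx N)

/-- For `δ ≥ 3/2` and `α > 0`,
`ψ((α+δ+1)/2) - ψ((α+δ)/2 + 1) + 1/(α+δ²) < 0`. -/
theorem digamma_combination_neg (δ α : ℝ) (hδ : 3 / 2 ≤ δ) (hα : 0 < α) :
    digamma ((α + δ + 1) / 2) - digamma ((α + δ) / 2 + 1) + 1 / (α + δ ^ 2) < 0 := by
  set x : ℝ := (α + δ + 1) / 2 with hxdef
  have hx : 5 / 4 ≤ x := by rw [hxdef]; linarith
  have hkey := key_bound x hx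
  have hrw : (α + δ) / 2 + 1 = x + 1 / 2 := by rw [hxdef]; ring
  rw [hrw]
  have h1 : (0:ℝ) < 2 * x - 3 / 8 := by linarith
  have h2 : (0:ℝ) < α + δ ^ 2 := by nlinarith
  have h3 : 2 * x - 3 / 8 < α + δ ^ 2 := by
    rw [hxdef]; nlinarith [sq_nonneg (δ - 3/2)]
  have h4 : 1 / (α + δ ^ 2) < 1 / (2 * x - 3 / 8) := by
    exact one_div_lt_one_div_of_lt h1 h3
  linarith
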